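/- arXiv:2111.14608 — 6 statements merged into one kernel-verified Lean document; each statement's English description precedes it below -/
import Mathlib

section
/- In the GEW₁ model (uniform priors on all parameters), the full conditional posterior density of θ₁ is log-concave on ℝ. Precisely: for any fixed θ₂, θ₃, θ₄ ∈ ℝ and β > 0, the function ℓ : ℝ → ℝ given by ℓ(t) = −t·(Σ_{i=1}^k r_i) − Σ_{i=1}^k (n_i − r_i) T_i exp(−t − θ₂/T_i − θ₃V_i − θ₄V_i/T_i) τ_i^β − Σ_{i=1}^k Σ_{j=1}^{r_i} T_i exp(−t − θ₂/T_i − θ₃V_i − θ₄V_i/T_i) x_{ij}^β is concave on ℝ (equivalently, its second derivative is ≤ 0 everywhere). -/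
open Real Finset

lemma convexOn_exp_neg : ConvexOn ℝ Set.univ (fun t : ℝ => Real.exp (-t)) := by
  have := convexOn_exp.comp_affineMap (-(AffineMap.id ℝ ℝ))
  simpa [Function.comp_def] using this

lemma convexOn_finset_sum {ι : Type*} (s : Finset ι) (f : ι → ℝ → ℝ)
    (h : ∀ i ∈ s, ConvexOn ℝ Set.univ (f i)) :
    ConvexOn ℝ Set.univ (fun x => ∑ i ∈ s, f i x) := by
  classical
  induction s using Finset.cons_induction with
  | empty => simpa using convexOn_const (0:ℝ) convex_univ
  | cons a s ha ih =>
    simp only [Finset.sum_cons]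
    exact (h a (Finset.mem_cons_self a s)).add (ih fun i hi => h i (Finset.mem_cons.2 (Or.inr hi)))

lemma convexOn_cexp (c a : ℝ) (hc : 0 ≤ c) :
    ConvexOn ℝ Set.univ (fun t : ℝ => c * Real.exp (-t - a)) := by
  have h := convexOn_exp_neg.smul (c := c * Real.exp (-a)) (by positivity)
  have he : (fun t : ℝ => c * Real.exp (-t - a))
      = fun t : ℝ => (c * Real.exp (-a)) • Real.exp (-t) := by
    funext t
    rw [show -t - a = -t + (-a) by ring, Real.exp_add, smul_eq_mul]
    ring
  rw [he]; exact h

theorem gew1_theta1_logconcave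
    (k : ℕ) (T V τ : Fin k → ℝ) (n r : Fin k → ℕ)
    (x : (i : Fin k) → Fin (r i) → ℝ)
    (hT : ∀ i, 0 < T i) (hrn : ∀ i, r i ≤ n i)
    (hτ : ∀ i, 0 < τ i) (hx : ∀ i j, 0 < x i j)
    (θ₂ θ₃ θ₄ β : ℝ) (hβ : 0 < β) :
    ConcaveOn ℝ Set.univ (fun t : ℝ =>
      -t * (∑ i, (r i : ℝ))
      - ∑ i, ((n i : ℝ) - r i) * T i * Real.exp (-t - θ₂ / T i - θ₃ * V i - θ₄ * V i / T i) * τ i ^ β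
      - ∑ i, ∑ j, T i * Real.exp (-t - θ₂ / T i - θ₃ * V i - θ₄ * V i / T i) * x i j ^ β) := by
  have hA : ConcaveOn ℝ Set.univ (fun t : ℝ => -t * (∑ i, (r i : ℝ))) := by
    refine ⟨convex_univ, fun p _ q _ a b ha hb hab => le_of_eq ?_⟩
    simp only [smul_eq_mul]; ring
  have hG1 : ConvexOn ℝ Set.univ (fun t : ℝ =>
      ∑ i, ((n i : ℝ) - r i) * T i * Real.exp (-t - θ₂ / T i - θ₃ * V i - θ₄ * V i / T i) * τ i ^ β) := by
    refine convexOn_finset_sum _ _ fun i _ => ?_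
    have hc : 0 ≤ ((n i : ℝ) - r i) * T i * τ i ^ β := by
      have : (r i : ℝ) ≤ n i := by exact_mod_cast hrn i
      have h1 : (0:ℝ) ≤ (n i : ℝ) - r i := by linarith
      exact mul_nonneg (mul_nonneg h1 (hT i).le) (Real.rpow_nonneg (hτ i).le β)
    have h := convexOn_cexp _ (θ₂ / T i + θ₃ * V i + θ₄ * V i / T i) hc
    have he : (fun t : ℝ => ((n i : ℝ) - r i) * T i * Real.exp (-t - θ₂ / T i - θ₃ * V i - θ₄ * V i / T i) * τ i ^ β)
        = fun t : ℝ => ((n i : ℝ) - r i) * T i * τ i ^ β *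
            Real.exp (-t - (θ₂ / T i + θ₃ * V i + θ₄ * V i / T i)) := by
      funext t; rw [show -t - (θ₂ / T i + θ₃ * V i + θ₄ * V i / T i)
          = -t - θ₂ / T i - θ₃ * V i - θ₄ * V i / T i by ring]; ring
    rw [he]; exact h
  have hG2 : ConvexOn ℝ Set.univ (fun t : ℝ =>
      ∑ i, ∑ j, T i * Real.exp (-t - θ₂ / T i - θ₃ * V i - θ₄ * V i / T i) * x i j ^ β) := by
    refine convexOn_finset_sum _ _ fun i _ => ?_
    refine convexOn_finset_sum _ _ fun j _ => ?_
    have hc : 0 ≤ T i * x i j ^ β := by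
      have := hT i; have := hx i j; positivity
    have h := convexOn_cexp _ (θ₂ / T i + θ₃ * V i + θ₄ * V i / T i) hc
    have he : (fun t : ℝ => T i * Real.exp (-t - θ₂ / T i - θ₃ * V i - θ₄ * V i / T i) * x i j ^ β)
        = fun t : ℝ => T i * x i j ^ β *
            Real.exp (-t - (θ₂ / T i + θ₃ * V i + θ₄ * V i / T i)) := by
      funext t; rw [show -t - (θ₂ / T i + θ₃ * V i + θ₄ * V i / T i)
          = -t - θ₂ / T i - θ₃ * V i - θ₄ * V i / T i by ring]; ring
    rw [he]; exact h
  exact (hA.sub hG1).sub hG2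
end

section
/- In the GEW₁ model (uniform priors on all parameters), the full conditional posterior density of θ₃ is log-concave on ℝ. Precisely: for any fixed θ₁, θ₂, θ₄ ∈ ℝ and β > 0, the function ℓ : ℝ → ℝ given by ℓ(t) = −t·(Σ_{i=1}^k r_iV_i) − Σ_{i=1}^k (n_i − r_i) T_i exp(−θ₁ − θ₂/T_i − tV_i − θ₄V_i/T_i) τ_i^β − Σ_{i=1}^k Σ_{j=1}^{r_i} T_i exp(−θ₁ − θ₂/T_i − tV_i − θ₄V_i/T_i) x_{ij}^β is concave on ℝ. -/
open Real Finset

lemma convexOn_exp_affine (a b : ℝ) : ConvexOn ℝ Set.univ (fun t : ℝ => Real.exp (a + b * t)) := by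
  have h := convexOn_exp.comp_affineMap (LinearMap.toAffineMap (b • LinearMap.id) + AffineMap.const ℝ ℝ a)
  simpa [Function.comp_def, Pi.add_apply, Pi.smul_apply, Function.const_apply, id_eq, smul_eq_mul, mul_comm, add_comm] using h

lemma convexOn_sum' {ι : Type*} (s : Finset ι) (f : ι → ℝ → ℝ)
    (h : ∀ i ∈ s, ConvexOn ℝ Set.univ (f i)) :
    ConvexOn ℝ Set.univ (fun t => ∑ i ∈ s, f i t) := by
  classical
  induction s using Finset.induction with
  | empty => simpa using convexOn_const (0 : ℝ) convex_univ
  | @insert a s hnot ih =>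
    simp only [Finset.sum_insert hnot]
    exact (h a (Finset.mem_insert_self a s)).add (ih fun i hi => h i (Finset.mem_insert_of_mem hi))

lemma termConvex (c₁ c₂ A B D E : ℝ) (h : 0 ≤ c₁ * c₂) :
    ConvexOn ℝ Set.univ (fun t : ℝ => c₁ * Real.exp (A - B - t * D - E) * c₂) := by
  have h2 := convexOn_exp_affine (A - B - E) (-D)
  have heq : (fun t : ℝ => c₁ * Real.exp (A - B - t * D - E) * c₂)
      = fun t : ℝ => (c₁ * c₂) • Real.exp ((A - B - E) + (-D) * t) := by
    funext t
    rw [show A - B - t * D - E = (A - B - E) + (-D) * t by ring]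
    simp [smul_eq_mul]; ring
  rw [heq]
  exact h2.smul h

theorem gew1_theta3_logconcave
    (k : ℕ) (T V τ : Fin k → ℝ) (n r : Fin k → ℕ)
    (x : (i : Fin k) → Fin (r i) → ℝ)
    (hT : ∀ i, 0 < T i) (hrn : ∀ i, r i ≤ n i)
    (hτ : ∀ i, 0 < τ i) (hx : ∀ i j, 0 < x i j)
    (θ₁ θ₂ θ₄ β : ℝ) (hβ : 0 < β) :
    ConcaveOn ℝ Set.univ (fun t : ℝ =>
      -t * (∑ i, (r i : ℝ) * V i)
      - ∑ i, ((n i : ℝ) - r i) * T i * Real.exp (-θ₁ - θ₂ / T i - t * V i - θ₄ * V i / T i) * τ i ^ β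
      - ∑ i, ∑ j, T i * Real.exp (-θ₁ - θ₂ / T i - t * V i - θ₄ * V i / T i) * x i j ^ β) := by
  have hlin : ConcaveOn ℝ Set.univ (fun t : ℝ => -t * (∑ i, (r i : ℝ) * V i)) := by
    refine ⟨convex_univ, fun p _ q _ a b _ _ hab => le_of_eq ?_⟩
    simp only [smul_eq_mul]; ring
  have hB : ConvexOn ℝ Set.univ (fun t : ℝ =>
      ∑ i, ((n i : ℝ) - r i) * T i * Real.exp (-θ₁ - θ₂ / T i - t * V i - θ₄ * V i / T i) * τ i ^ β) := by
    refine convexOn_sum' _ _ fun i _ => termConvex _ _ _ _ _ _ ?_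
    have h1 : (0:ℝ) ≤ (n i : ℝ) - r i := by
      have : (r i : ℝ) ≤ (n i : ℝ) := Nat.cast_le.mpr (hrn i)
      linarith
    have := (hT i).le
    have := (Real.rpow_pos_of_pos (hτ i) β).le
    positivity
  have hC : ConvexOn ℝ Set.univ (fun t : ℝ =>
      ∑ i, ∑ j, T i * Real.exp (-θ₁ - θ₂ / T i - t * V i - θ₄ * V i / T i) * x i j ^ β) := by
    refine convexOn_sum' _ _ fun i _ => convexOn_sum' _ _ fun j _ => ?_
    refine termConvex (T i) (x i j ^ β) (-θ₁) (θ₂ / T i) (V i) (θ₄ * V i / T i) ?_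
    have := (hT i).le
    have := (Real.rpow_pos_of_pos (hx i j) β).le
    positivity
  exact (hlin.sub hB).sub hC
end

section
/- In the GEW₁ model (uniform priors on all parameters), the full conditional posterior density of θ₄ is log-concave on ℝ. Precisely: for any fixed θ₁, θ₂, θ₃ ∈ ℝ and β > 0, the function ℓ : ℝ → ℝ given by ℓ(t) = −t·(Σ_{i=1}^k r_iV_i/T_i) − Σ_{i=1}^k (n_i − r_i) T_i exp(−θ₁ − θ₂/T_i − θ₃V_i − tV_i/T_i) τ_i^β − Σ_{i=1}^k Σ_{j=1}^{r_i} T_i exp(−θ₁ − θ₂/T_i − θ₃V_i − tV_i/T_i) x_{ij}^β is concave on ℝ. -/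
open Real Finset

private lemma my_convexOn_sum {ι : Type*} (s : Finset ι) (f : ι → ℝ → ℝ)
    (hf : ∀ i ∈ s, ConvexOn ℝ Set.univ (f i)) :
    ConvexOn ℝ Set.univ (fun t => ∑ i ∈ s, f i t) := by
  classical
  induction s using Finset.induction with
  | empty => simpa using convexOn_const 0 convex_univ
  | insert a s hmem ih =>
    simp only [Finset.sum_insert hmem]
    exact (hf a (by simp)).add (ih fun i hi => hf i (by simp [hi]))

private lemma my_exp_convex (a c d : ℝ) (ha : 0 ≤ a) :
    ConvexOn ℝ Set.univ (fun t : ℝ => a * Real.exp (c * t + d)) := by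
  have h := (convexOn_exp.comp_affineMap (AffineMap.lineMap d (d + c))).smul ha
  have he : (fun t : ℝ => a * Real.exp (c * t + d)) =
      fun t : ℝ => a • (Real.exp ∘ (AffineMap.lineMap d (d + c))) t := by
    funext t
    simp only [Function.comp, AffineMap.lineMap_apply, smul_eq_mul, vsub_eq_sub,
      add_sub_cancel_left, vadd_eq_add]
    ring_nf
  rw [he]
  simpa using h

theorem gew1_theta4_logconcave
    (k : ℕ) (T V τ : Fin k → ℝ) (n r : Fin k → ℕ)
    (x : (i : Fin k) → Fin (r i) → ℝ)
    (hT : ∀ i, 0 < T i) (hrn : ∀ i, r i ≤ n i)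
    (hτ : ∀ i, 0 < τ i) (hx : ∀ i j, 0 < x i j)
    (θ₁ θ₂ θ₃ β : ℝ) (hβ : 0 < β) :
    ConcaveOn ℝ Set.univ (fun t : ℝ =>
      -t * (∑ i, (r i : ℝ) * V i / T i)
      - ∑ i, ((n i : ℝ) - r i) * T i * Real.exp (-θ₁ - θ₂ / T i - θ₃ * V i - t * V i / T i) * τ i ^ β
      - ∑ i, ∑ j, T i * Real.exp (-θ₁ - θ₂ / T i - θ₃ * V i - t * V i / T i) * x i j ^ β) := by
  have hlin : ConcaveOn ℝ Set.univ (fun t : ℝ => -t * (∑ i, (r i : ℝ) * V i / T i)) := by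
    have : (fun t : ℝ => -t * (∑ i, (r i : ℝ) * V i / T i)) =
        fun t : ℝ => (LinearMap.toSpanSingleton ℝ ℝ (-(∑ i, (r i : ℝ) * V i / T i))) t := by
      funext t; rw [LinearMap.toSpanSingleton_apply, smul_eq_mul]; ring
    rw [this]
    exact (LinearMap.toSpanSingleton ℝ ℝ _).concaveOn convex_univ
  have hterm : ∀ (i : Fin k) (a : ℝ), 0 ≤ a → ConvexOn ℝ Set.univ
      (fun t : ℝ => a * Real.exp (-θ₁ - θ₂ / T i - θ₃ * V i - t * V i / T i)) := by
    intro i a ha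
    have h := my_exp_convex a (-(V i / T i)) (-θ₁ - θ₂ / T i - θ₃ * V i) ha
    convert h using 2 with t
    ring_nf
  have hs1 : ConvexOn ℝ Set.univ (fun t : ℝ =>
      ∑ i, ((n i : ℝ) - r i) * T i * Real.exp (-θ₁ - θ₂ / T i - θ₃ * V i - t * V i / T i) * τ i ^ β) := by
    apply my_convexOn_sum
    intro i _
    have ha : 0 ≤ ((n i : ℝ) - r i) * T i * τ i ^ β := by
      apply mul_nonneg (mul_nonneg (by
        have := hrn i; simp only [sub_nonneg]; exact_mod_cast this) (hT i).le)
      exact Real.rpow_nonneg (hτ i).le β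
    have h := hterm i _ ha
    convert h using 2 with t
    ring
  have hs2 : ConvexOn ℝ Set.univ (fun t : ℝ =>
      ∑ i, ∑ j, T i * Real.exp (-θ₁ - θ₂ / T i - θ₃ * V i - t * V i / T i) * x i j ^ β) := by
    apply my_convexOn_sum
    intro i _
    apply my_convexOn_sum
    intro j _
    have ha : 0 ≤ T i * x i j ^ β := mul_nonneg (hT i).le (Real.rpow_nonneg (hx i j).le β)
    have h := hterm i _ ha
    convert h using 2 with t
    ring
  exact (hlin.sub hs1).sub hs2
end

section
/- In the GEW₂ model (gamma priors on all parameters), the full conditional posterior density of θ₁ is log-concave on (0, ∞), provided the gamma shape hyperparameter c₁₀ satisfies c₁₀ ≥ 1. Precisely: for any fixed θ₂, θ₃, θ₄ > 0, β > 0, c₁₀ ≥ 1 and c₁₁ > 0, the function ℓ : (0,∞) → ℝ given by ℓ(t) = (c₁₀ − 1)·ln t − c₁₁·t − t·(Σ_{i=1}^k r_i) − Σ_{i=1}^k (n_i − r_i) T_i exp(−t − θ₂/T_i − θ₃V_i − θ₄V_i/T_i) τ_i^β − Σ_{i=1}^k Σ_{j=1}^{r_i} T_i exp(−t − θ₂/T_i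 − θ₃V_i − θ₄V_i/T_i) x_{ij}^β is concave on (0, ∞). -/
open Real Finset

private lemma aux_exp_convex (C : ℝ) : ConvexOn ℝ Set.univ fun t : ℝ => Real.exp (-t - C) := by
  refine ⟨convex_univ, fun p _ q _ a b ha hb hab => ?_⟩
  have h := convexOn_exp.2 (Set.mem_univ (-p - C)) (Set.mem_univ (-q - C)) ha hb hab
  simp only [smul_eq_mul] at h ⊢
  calc Real.exp (-(a * p + b * q) - C)
      = Real.exp (a * (-p - C) + b * (-q - C)) := by
        congr 1; linear_combination C * hab
    _ ≤ a * Real.exp (-p - C) + b * Real.exp (-q - C) := h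

private lemma aux_dexp_convex (C d : ℝ) (hd : 0 ≤ d) :
    ConvexOn ℝ Set.univ fun t : ℝ => d * Real.exp (-t - C) := by
  have := (aux_exp_convex C).smul hd
  simpa [Pi.smul_apply, smul_eq_mul] using this

private lemma concaveOn_finset_sum {ι : Type*} (s : Finset ι) {S : Set ℝ} (hS : Convex ℝ S)
    {f : ι → ℝ → ℝ} (h : ∀ i ∈ s, ConcaveOn ℝ S (f i)) :
    ConcaveOn ℝ S (fun t => ∑ i ∈ s, f i t) := by
  classical
  induction s using Finset.induction with
  | empty => simpa using concaveOn_const 0 hS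
  | insert _ _ hnot ih =>
    rename_i a s
    simp only [Finset.sum_insert hnot]
    exact (h a (Finset.mem_insert_self a s)).add (ih fun i hi => h i (Finset.mem_insert_of_mem hi))

theorem gew2_theta1_logconcave
    (k : ℕ) (T V τ : Fin k → ℝ) (n r : Fin k → ℕ)
    (x : (i : Fin k) → Fin (r i) → ℝ)
    (hT : ∀ i, 0 < T i) (hrn : ∀ i, r i ≤ n i)
    (hτ : ∀ i, 0 < τ i) (hx : ∀ i j, 0 < x i j)
    (θ₂ θ₃ θ₄ β : ℝ) (hθ : 0 < θ₂ ∧ 0 < θ₃ ∧ 0 < θ₄) (hβ : 0 < β)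
    (c₁₀ c₁₁ : ℝ) (hcs : 1 ≤ c₁₀) (hcr : 0 < c₁₁) :
    ConcaveOn ℝ (Set.Ioi (0 : ℝ)) (fun t : ℝ =>
      (c₁₀ - 1) * Real.log t - c₁₁ * t
      - t * (∑ i, (r i : ℝ))
      - ∑ i, ((n i : ℝ) - r i) * T i * Real.exp (-t - θ₂ / T i - θ₃ * V i - θ₄ * V i / T i) * τ i ^ β
      - ∑ i, ∑ j, T i * Real.exp (-t - θ₂ / T i - θ₃ * V i - θ₄ * V i / T i) * x i j ^ β) := by
  set C : Fin k → ℝ := fun i => θ₂ / T i + θ₃ * V i + θ₄ * V i / T i with hC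
  have harg : ∀ (i : Fin k) (t : ℝ),
      -t - θ₂ / T i - θ₃ * V i - θ₄ * V i / T i = -t - C i := by
    intro i t; rw [hC]; ring
  have hIoi : Convex ℝ (Set.Ioi (0:ℝ)) := convex_Ioi 0
  have h1 : ConcaveOn ℝ (Set.Ioi (0:ℝ)) (fun t => (c₁₀ - 1) * Real.log t) := by
    have := (strictConcaveOn_log_Ioi.concaveOn).smul (c := c₁₀ - 1) (by linarith)
    simpa [Pi.smul_apply, smul_eq_mul] using this
  have hnn : (0:ℝ) ≤ c₁₁ + ∑ i, (r i : ℝ) := by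
    have : (0:ℝ) ≤ ∑ i, (r i : ℝ) := Finset.sum_nonneg fun i _ => Nat.cast_nonneg _
    linarith
  have h2 : ConcaveOn ℝ (Set.Ioi (0:ℝ))
      (fun t => -((c₁₁ + ∑ i, (r i : ℝ)) * t)) := by
    have h := ((convexOn_id hIoi).smul hnn).neg
    exact h.congr fun t _ => by simp [smul_eq_mul]
  have h3 : ConcaveOn ℝ (Set.Ioi (0:ℝ))
      (fun t => ∑ i, -(((n i : ℝ) - r i) * T i * τ i ^ β * Real.exp (-t - C i))) := by
    refine concaveOn_finset_sum _ hIoi fun i _ => ?_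
    have hnr : (0:ℝ) ≤ (n i : ℝ) - r i := by
      have : (r i : ℝ) ≤ n i := by exact_mod_cast hrn i
      linarith
    have hd : (0:ℝ) ≤ ((n i : ℝ) - r i) * T i * τ i ^ β :=
      mul_nonneg (mul_nonneg hnr (hT i).le) (Real.rpow_nonneg (hτ i).le β)
    exact ((aux_dexp_convex (C i) _ hd).subset (Set.subset_univ _) hIoi).neg
  have h4 : ConcaveOn ℝ (Set.Ioi (0:ℝ))
      (fun t => ∑ i, ∑ j, -(T i * x i j ^ β * Real.exp (-t - C i))) := by
    refine concaveOn_finset_sum _ hIoi fun i _ => ?_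
    refine concaveOn_finset_sum _ hIoi fun j _ => ?_
    have hd : (0:ℝ) ≤ T i * x i j ^ β :=
      mul_nonneg (hT i).le (Real.rpow_nonneg (hx i j).le β)
    exact ((aux_dexp_convex (C i) _ hd).subset (Set.subset_univ _) hIoi).neg
  have htot := ((h1.add h2).add h3).add h4
  refine htot.congr fun t _ => ?_
  simp only [Pi.add_apply]
  have e3 : (∑ i, -(((n i : ℝ) - r i) * T i * τ i ^ β * Real.exp (-t - C i)))
      = -∑ i, ((n i : ℝ) - r i) * T i * Real.exp (-t - θ₂ / T i - θ₃ * V i - θ₄ * V i / T i) * τ i ^ β := by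
    simp only [Finset.sum_neg_distrib]
    congr 1
    refine Finset.sum_congr rfl fun i _ => ?_
    rw [harg i t]; ring
  have e4 : (∑ i, ∑ j, -(T i * x i j ^ β * Real.exp (-t - C i)))
      = -∑ i, ∑ j, T i * Real.exp (-t - θ₂ / T i - θ₃ * V i - θ₄ * V i / T i) * x i j ^ β := by
    simp only [Finset.sum_neg_distrib]
    congr 1
    refine Finset.sum_congr rfl fun i _ => ?_
    refine Finset.sum_congr rfl fun j _ => ?_
    rw [harg i t]; ring
  rw [e3, e4]
  ring
end

section
/- In the GEW₂ model (gamma priors on all parameters), the full conditional posterior density of θ₃ is log-concave on (0, ∞), provided the gamma shape hyperparameter c₁₄ satisfies c₁₄ ≥ 1. Precisely: for any fixed θ₁, θ₂, θ₄ > 0, β > 0, c₁₄ ≥ 1 and c₁₅ > 0, the function ℓ : (0,∞) → ℝ given by ℓ(t) = (c₁₄ − 1)·ln t − c₁₅·t − t·(Σ_{i=1}^k r_iV_i) − Σ_{i=1}^k (n_i − r_i) T_i exp(−θ₁ − θ₂/T_i − tV_i − θ₄V_i/T_i) τ_i^β − Σ_{i=1}^k Σ_{j=1}^{r_i} T_i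 exp(−θ₁ − θ₂/T_i − tV_i − θ₄V_i/T_i) x_{ij}^β is concave on (0, ∞). -/
open Real Finset

private lemma gew2_convexOn_term (c d a b : ℝ) (hc : 0 ≤ c) (hd : 0 ≤ d) :
    ConvexOn ℝ (Set.Ioi (0:ℝ)) (fun t : ℝ => c * Real.exp (a - t * b) * d) := by
  refine ⟨convex_Ioi 0, fun x _ y _ p q hp hq hpq => ?_⟩
  simp only [smul_eq_mul]
  have h1 : a - (p * x + q * y) * b = p * (a - x * b) + q * (a - y * b) := by
    linear_combination -a * hpq
  rw [h1]
  have h2 : Real.exp (p * (a - x * b) + q * (a - y * b))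
      ≤ p * Real.exp (a - x * b) + q * Real.exp (a - y * b) :=
    convexOn_exp.2 (Set.mem_univ _) (Set.mem_univ _) hp hq hpq
  have hcd : 0 ≤ c * d := mul_nonneg hc hd
  nlinarith [Real.exp_pos (a - x * b), Real.exp_pos (a - y * b)]

private lemma gew2_convexOn_sum {ι : Type*} (s : Finset ι) (f : ι → ℝ → ℝ)
    (h : ∀ i ∈ s, ConvexOn ℝ (Set.Ioi (0:ℝ)) (f i)) :
    ConvexOn ℝ (Set.Ioi (0:ℝ)) (fun t => ∑ i ∈ s, f i t) := by
  classical
  induction s using Finset.induction_on with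
  | empty => simpa using convexOn_const (0:ℝ) (convex_Ioi 0)
  | insert _ _ hni ih =>
    rename_i a s
    simp only [Finset.sum_insert hni]
    exact (h a (Finset.mem_insert_self _ _)).add
      (ih fun i hi => h i (Finset.mem_insert_of_mem hi))

private lemma gew2_convexOn_linear (m : ℝ) :
    ConvexOn ℝ (Set.Ioi (0:ℝ)) (fun t : ℝ => m * t) := by
  refine ⟨convex_Ioi 0, fun x _ y _ p q hp hq hpq => le_of_eq ?_⟩
  simp only [smul_eq_mul]; ring

private lemma gew2_convexOn_linear' (m : ℝ) :
    ConvexOn ℝ (Set.Ioi (0:ℝ)) (fun t : ℝ => t * m) := by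
  refine ⟨convex_Ioi 0, fun x _ y _ p q hp hq hpq => le_of_eq ?_⟩
  simp only [smul_eq_mul]; ring

theorem gew2_theta3_logconcave
    (k : ℕ) (T V τ : Fin k → ℝ) (n r : Fin k → ℕ)
    (x : (i : Fin k) → Fin (r i) → ℝ)
    (hT : ∀ i, 0 < T i) (hrn : ∀ i, r i ≤ n i)
    (hτ : ∀ i, 0 < τ i) (hx : ∀ i j, 0 < x i j)
    (θ₁ θ₂ θ₄ β : ℝ) (hθ : 0 < θ₁ ∧ 0 < θ₂ ∧ 0 < θ₄) (hβ : 0 < β)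
    (c₁₄ c₁₅ : ℝ) (hcs : 1 ≤ c₁₄) (hcr : 0 < c₁₅) :
    ConcaveOn ℝ (Set.Ioi (0 : ℝ)) (fun t : ℝ =>
      (c₁₄ - 1) * Real.log t - c₁₅ * t
      - t * (∑ i, (r i : ℝ) * V i)
      - ∑ i, ((n i : ℝ) - r i) * T i * Real.exp (-θ₁ - θ₂ / T i - t * V i - θ₄ * V i / T i) * τ i ^ β
      - ∑ i, ∑ j, T i * Real.exp (-θ₁ - θ₂ / T i - t * V i - θ₄ * V i / T i) * x i j ^ β) := by
  have harg : ∀ (t : ℝ) (i : Fin k),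
      -θ₁ - θ₂ / T i - t * V i - θ₄ * V i / T i
        = (-θ₁ - θ₂ / T i - θ₄ * V i / T i) - t * V i := fun t i => by ring
  simp only [harg]
  have hA : ConcaveOn ℝ (Set.Ioi (0:ℝ)) (fun t : ℝ => (c₁₄ - 1) * Real.log t) := by
    have h := strictConcaveOn_log_Ioi.concaveOn.smul (c := c₁₄ - 1) (by linarith)
    simpa [smul_eq_mul] using h
  have hB1 := gew2_convexOn_linear c₁₅
  have hB2 := gew2_convexOn_linear' (∑ i, (r i : ℝ) * V i)
  have hC : ConvexOn ℝ (Set.Ioi (0:ℝ)) (fun t : ℝ => ∑ i,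
      ((n i : ℝ) - r i) * T i * Real.exp ((-θ₁ - θ₂ / T i - θ₄ * V i / T i) - t * V i) * τ i ^ β) := by
    refine gew2_convexOn_sum _ _ fun i _ => gew2_convexOn_term _ _ _ _ ?_ ?_
    · have h1 : (r i : ℝ) ≤ (n i : ℝ) := Nat.cast_le.mpr (hrn i)
      exact mul_nonneg (by linarith) (hT i).le
    · exact (Real.rpow_pos_of_pos (hτ i) β).le
  have hD : ConvexOn ℝ (Set.Ioi (0:ℝ)) (fun t : ℝ => ∑ i, ∑ j,
      T i * Real.exp ((-θ₁ - θ₂ / T i - θ₄ * V i / T i) - t * V i) * x i j ^ β) := by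
    refine gew2_convexOn_sum _ _ fun i _ => gew2_convexOn_sum _ _ fun j _ =>
      gew2_convexOn_term _ _ _ _ (hT i).le (Real.rpow_pos_of_pos (hx i j) β).le
  exact (((hA.sub hB1).sub hB2).sub hC).sub hD
end

section
/- In the GEW₂ model (gamma priors on all parameters), the full conditional posterior density of the Weibull shape parameter β is log-concave on (0, ∞), provided at least one failure occurred, i.e. Σ_{i=1}^k r_i ≥ 1. Precisely: for any fixed θ₁, θ₂, θ₃, θ₄ > 0, gamma hyperparameters c₁₈ > 0 and c₁₉ > 0, and Σ_{i=1}^k r_i ≥ 1, writing A_i = exp(−θ₁ − θ₂/T_i − θ₃V_i − θ₄V_i/T_i), the function ℓ : (0,∞) → ℝ given by ℓ(b) = (c₁₈ − 1)·ln b − c₁₉·b + (Σ_{i=1}^k r_i)·ln b − Σ_{i=1}^k (n_i − r_i) T_i A_i τ_i^b − Σ_{i=1}^k Σ_{j=1}^{r_i} T_i A_i x_{ij}^b + (b − 1)·Σ_{i=1}^k Σ_{j=1}^{r_i} ln x_{ij} is concave on (0, ∞). -/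
open Real Finset

private lemma myConvexOn_sum {ι : Type*} {s : Set ℝ} (hs : Convex ℝ s) (t : Finset ι)
    (f : ι → ℝ → ℝ) (hf : ∀ i ∈ t, ConvexOn ℝ s (f i)) :
    ConvexOn ℝ s (fun b => ∑ i ∈ t, f i b) := by
  classical
  induction t using Finset.induction_on with
  | empty => simpa using convexOn_const 0 hs
  | insert _ _ hnotmem ih =>
    rename_i a t'
    simp only [Finset.sum_insert hnotmem]
    exact (hf a (Finset.mem_insert_self a t')).add
      (ih fun i hi => hf i (Finset.mem_insert_of_mem hi))

private lemma convexOn_const_rpow {c τ : ℝ} (hc : 0 ≤ c) (hτ : 0 < τ) :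
    ConvexOn ℝ (Set.Ioi (0 : ℝ)) (fun b : ℝ => c * τ ^ b) := by
  have h1 : ConvexOn ℝ Set.univ (fun b : ℝ => Real.exp (Real.log τ * b)) := by
    have := convexOn_exp.comp_affineMap (Real.log τ • AffineMap.id ℝ ℝ)
    simpa [Function.comp_def, Pi.smul_apply, smul_eq_mul] using this
  have h2 : ConvexOn ℝ Set.univ (fun b : ℝ => c * Real.exp (Real.log τ * b)) := by
    simpa [smul_eq_mul] using h1.smul hc
  have h3 : (fun b : ℝ => c * τ ^ b) = fun b : ℝ => c * Real.exp (Real.log τ * b) := by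
    funext b
    rw [Real.rpow_def_of_pos hτ]
  rw [h3]
  exact h2.subset (Set.subset_univ _) (convex_Ioi 0)

private lemma concaveOn_affine (m q : ℝ) :
    ConcaveOn ℝ (Set.Ioi (0 : ℝ)) (fun b : ℝ => m * b + q) := by
  refine ⟨convex_Ioi 0, fun x _ y _ a b ha hb hab => le_of_eq ?_⟩
  simp only [smul_eq_mul]
  linear_combination q * hab

private lemma convexOn_affine (m q : ℝ) :
    ConvexOn ℝ (Set.Ioi (0 : ℝ)) (fun b : ℝ => m * b + q) := by
  refine ⟨convex_Ioi 0, fun x _ y _ a b ha hb hab => le_of_eq ?_⟩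
  simp only [smul_eq_mul]
  linear_combination (-q) * hab

theorem gew2_beta_logconcave
    (k : ℕ) (T V τ : Fin k → ℝ) (n r : Fin k → ℕ)
    (x : (i : Fin k) → Fin (r i) → ℝ)
    (hT : ∀ i, 0 < T i) (hrn : ∀ i, r i ≤ n i)
    (hτ : ∀ i, 0 < τ i) (hx : ∀ i j, 0 < x i j)
    (θ₁ θ₂ θ₃ θ₄ : ℝ) (hθ₁ : 0 < θ₁) (hθ₂ : 0 < θ₂) (hθ₃ : 0 < θ₃) (hθ₄ : 0 < θ₄)
    (c₁₈ c₁₉ : ℝ) (hc₁₈ : 0 < c₁₈) (hc₁₉ : 0 < c₁₉)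
    (hr : 1 ≤ ∑ i, r i) :
    ConcaveOn ℝ (Set.Ioi (0 : ℝ)) (fun b : ℝ =>
      (c₁₈ - 1) * Real.log b - c₁₉ * b
      + (∑ i, (r i : ℝ)) * Real.log b
      - ∑ i, ((n i : ℝ) - r i) * T i * Real.exp (-θ₁ - θ₂ / T i - θ₃ * V i - θ₄ * V i / T i) * τ i ^ b
      - ∑ i, ∑ j, T i * Real.exp (-θ₁ - θ₂ / T i - θ₃ * V i - θ₄ * V i / T i) * x i j ^ b
      + (b - 1) * ∑ i, ∑ j, Real.log (x i j)) := by
  set A : Fin k → ℝ := fun i => Real.exp (-θ₁ - θ₂ / T i - θ₃ * V i - θ₄ * V i / T i) with hA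
  set C : ℝ := ∑ i, ∑ j, Real.log (x i j) with hC
  have hsum : (1 : ℝ) ≤ ∑ i, (r i : ℝ) := by
    have : ((1 : ℕ) : ℝ) ≤ ((∑ i, r i : ℕ) : ℝ) := Nat.cast_le.mpr hr
    simpa [Nat.cast_sum] using this
  -- regroup
  have hfun : (fun b : ℝ =>
      (c₁₈ - 1) * Real.log b - c₁₉ * b
      + (∑ i, (r i : ℝ)) * Real.log b
      - ∑ i, ((n i : ℝ) - r i) * T i * A i * τ i ^ b
      - ∑ i, ∑ j, T i * A i * x i j ^ b
      + (b - 1) * C)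
      = fun b : ℝ =>
      ((c₁₈ - 1 + ∑ i, (r i : ℝ)) * Real.log b + (C * b + (-C)))
      - ((∑ i, ((n i : ℝ) - r i) * T i * A i * τ i ^ b)
        + ((∑ i, ∑ j, T i * A i * x i j ^ b) + c₁₉ * b)) := by
    funext b; ring
  rw [hfun]
  have hlog : ConcaveOn ℝ (Set.Ioi (0 : ℝ))
      (fun b : ℝ => (c₁₈ - 1 + ∑ i, (r i : ℝ)) * Real.log b) := by
    have hcoef : 0 ≤ c₁₈ - 1 + ∑ i, (r i : ℝ) := by linarith
    simpa [smul_eq_mul] using (strictConcaveOn_log_Ioi.concaveOn).smul hcoef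
  have haff : ConcaveOn ℝ (Set.Ioi (0 : ℝ)) (fun b : ℝ => C * b + (-C)) :=
    concaveOn_affine C (-C)
  have hS1 : ConvexOn ℝ (Set.Ioi (0 : ℝ))
      (fun b : ℝ => ∑ i, ((n i : ℝ) - r i) * T i * A i * τ i ^ b) := by
    refine myConvexOn_sum (convex_Ioi 0) _ _ fun i _ => ?_
    have hc : 0 ≤ ((n i : ℝ) - r i) * T i * A i := by
      have h1 : (0 : ℝ) ≤ (n i : ℝ) - r i := by
        have := hrn i; have : (r i : ℝ) ≤ n i := Nat.cast_le.mpr ‹r i ≤ n i›; linarith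
      exact mul_nonneg (mul_nonneg h1 (hT i).le) (Real.exp_pos _).le
    exact convexOn_const_rpow hc (hτ i)
  have hS2 : ConvexOn ℝ (Set.Ioi (0 : ℝ))
      (fun b : ℝ => ∑ i, ∑ j, T i * A i * x i j ^ b) := by
    refine myConvexOn_sum (convex_Ioi 0) _ _ fun i _ => ?_
    refine myConvexOn_sum (convex_Ioi 0) _ _ fun j _ => ?_
    have hc : 0 ≤ T i * A i := mul_nonneg (hT i).le (Real.exp_pos _).le
    exact convexOn_const_rpow hc (hx i j)
  have hlin : ConvexOn ℝ (Set.Ioi (0 : ℝ)) (fun b : ℝ => c₁₉ * b) := by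
    simpa using convexOn_affine c₁₉ 0
  exact (hlog.add haff).sub (hS1.add (hS2.add hlin))
end
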